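/- Suppose α > β > 0, and let Y ~ Bin(m⁺, α log n / n) and Z ~ Bin(m⁻, β log n / n) be independent with m⁺ = (1+o(1)) n/2 and m⁻ = (1+o(1)) n/2. Then for any ε > 0, P(Y − Z ≤ ε log n) ≤ n^{−(D₊(α,β) − (ε/2) log(α/β)) + o(1)}. -/

import Mathlib

open Finset
open scoped Classical

/-- `binomP m p k` is the probability that `Bin(m, p) = k`. -/
noncomputable def binomP (m : ℕ) (p : ℝ) (k : ℕ) : ℝ :=
  (m.choose k : ℝ) * p ^ k * (1 - p) ^ (m - k)

/-- `P(Y − Z ≤ t)` for independent `Y ~ Bin(mp, p)` and `Z ~ Bin(mm, q)`. -/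
noncomputable def probDiffLE (mp mm : ℕ) (p q : ℝ) (t : ℝ) : ℝ :=
  ∑ k ∈ Finset.range (mp + 1), ∑ l ∈ Finset.range (mm + 1),
    (if (k : ℝ) - (l : ℝ) ≤ t then binomP mp p k * binomP mm q l else 0)

lemma binomP_nonneg (m : ℕ) (p : ℝ) (k : ℕ) (hp0 : 0 ≤ p) (hp1 : p ≤ 1) :
    0 ≤ binomP m p k := by
  unfold binomP
  have : 0 ≤ 1 - p := by linarith
  positivity

lemma sum_binom (m : ℕ) (p x : ℝ) :
    ∑ k ∈ Finset.range (m + 1), binomP m p k * x ^ k = (p * x + (1 - p)) ^ m := by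
  rw [add_pow]
  refine Finset.sum_congr rfl fun k _ => ?_
  unfold binomP
  rw [mul_pow]
  ring

/-- Chernoff bound for the difference of two binomials. -/
lemma chernoff (M N : ℕ) (p q θ t : ℝ) (hp0 : 0 ≤ p) (hp1 : p ≤ 1)
    (hq0 : 0 ≤ q) (hq1 : q ≤ 1) (hθ : 0 ≤ θ) :
    probDiffLE M N p q t ≤ Real.exp (θ * t) *
      ((p * Real.exp (-θ) + (1 - p)) ^ M * (q * Real.exp θ + (1 - q)) ^ N) := by
  have key : probDiffLE M N p q t ≤
      ∑ k ∈ Finset.range (M + 1), ∑ l ∈ Finset.range (N + 1),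
        Real.exp (θ * t) *
          ((binomP M p k * (Real.exp (-θ)) ^ k) * (binomP N q l * (Real.exp θ) ^ l)) := by
    unfold probDiffLE
    refine Finset.sum_le_sum fun k _ => Finset.sum_le_sum fun l _ => ?_
    by_cases h : (k : ℝ) - (l : ℝ) ≤ t
    · rw [if_pos h]
      have hb1 := binomP_nonneg M p k hp0 hp1
      have hb2 := binomP_nonneg N q l hq0 hq1
      have h1 : (1 : ℝ) ≤ Real.exp (θ * (t - (k : ℝ) + (l : ℝ))) := by
        rw [← Real.exp_zero]
        apply Real.exp_le_exp.2
        have : 0 ≤ t - (k : ℝ) + (l : ℝ) := by linarith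
        positivity
      calc binomP M p k * binomP N q l
          ≤ binomP M p k * binomP N q l * Real.exp (θ * (t - (k : ℝ) + (l : ℝ))) := by
            nlinarith [mul_nonneg hb1 hb2]
        _ = Real.exp (θ * t) *
            ((binomP M p k * (Real.exp (-θ)) ^ k) * (binomP N q l * (Real.exp θ) ^ l)) := by
            have hexp : Real.exp (θ * (t - (k : ℝ) + (l : ℝ))) =
                Real.exp (θ * t) * (Real.exp (-θ)) ^ k * (Real.exp θ) ^ l := by
              rw [← Real.exp_nat_mul, ← Real.exp_nat_mul, ← Real.exp_add, ← Real.exp_add]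
              ring_nf
            rw [hexp]; ring
    · rw [if_neg h]
      have hb1 := binomP_nonneg M p k hp0 hp1
      have hb2 := binomP_nonneg N q l hq0 hq1
      have he : (0:ℝ) ≤ Real.exp (θ * t) := (Real.exp_pos _).le
      positivity
  refine key.trans_eq ?_
  rw [← sum_binom M p (Real.exp (-θ)), ← sum_binom N q (Real.exp θ)]
  rw [Finset.sum_mul_sum]
  rw [Finset.mul_sum]
  simp_rw [Finset.mul_sum]

lemma pow_le_exp (x : ℝ) (m : ℕ) (hx : 0 ≤ 1 + x) :
    (1 + x) ^ m ≤ Real.exp ((m : ℝ) * x) := by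
  rw [Real.exp_nat_mul]
  apply pow_le_pow_left₀ hx
  linarith [Real.add_one_le_exp x]

theorem statement6 (α β ε : ℝ) (hβ : 0 < β) (hβα : β < α) (hε : 0 < ε)
    (mp mm : ℕ → ℕ)
    (hmp : Filter.Tendsto (fun n : ℕ => (mp n : ℝ) / ((n : ℝ) / 2))
      Filter.atTop (nhds 1))
    (hmm : Filter.Tendsto (fun n : ℕ => (mm n : ℝ) / ((n : ℝ) / 2))
      Filter.atTop (nhds 1)) :
    ∀ δ : ℝ, 0 < δ → ∀ᶠ n : ℕ in Filter.atTop,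
      probDiffLE (mp n) (mm n) (α * Real.log n / n) (β * Real.log n / n)
          (ε * Real.log n)
        ≤ (n : ℝ) ^
            (-(((α + β) / 2 - Real.sqrt (α * β)) - ε / 2 * Real.log (α / β)) + δ) := by
  intro δ hδ
  have hα : 0 < α := hβ.trans hβα
  set θ : ℝ := Real.log (α / β) / 2 with hθdef
  have hαβ1 : 1 < α / β := (one_lt_div hβ).2 hβα
  have hlogαβ : 0 < Real.log (α / β) := Real.log_pos hαβ1
  have hθpos : 0 < θ := by positivity
  have hsa : 0 < Real.sqrt α := Real.sqrt_pos.2 hα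
  have hsb : 0 < Real.sqrt β := Real.sqrt_pos.2 hβ
  have ha2 : Real.sqrt α * Real.sqrt α = α := Real.mul_self_sqrt hα.le
  have hb2 : Real.sqrt β * Real.sqrt β = β := Real.mul_self_sqrt hβ.le
  have hsqrt : ∀ x : ℝ, 0 < x → Real.sqrt x = Real.exp (Real.log x / 2) := by
    intro x hx
    rw [Real.sqrt_eq_rpow, Real.rpow_def_of_pos hx]
    ring_nf
  have hexpθ : Real.exp θ = Real.sqrt α / Real.sqrt β := by
    rw [hsqrt α hα, hsqrt β hβ, ← Real.exp_sub, hθdef, Real.log_div hα.ne' hβ.ne']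
    ring_nf
  have hexpmθ : Real.exp (-θ) = Real.sqrt β / Real.sqrt α := by
    rw [hsqrt α hα, hsqrt β hβ, ← Real.exp_sub, hθdef, Real.log_div hα.ne' hβ.ne']
    ring_nf
  set c : ℝ := ((α + β) / 2 - Real.sqrt (α * β)) - ε / 2 * Real.log (α / β) with hcdef
  -- the drift function
  set g : ℕ → ℝ := fun n => θ * ε + ((mp n : ℝ) / n) * (α * (Real.exp (-θ) - 1))
      + ((mm n : ℝ) / n) * (β * (Real.exp θ - 1)) with hgdef
  have half : ∀ f : ℕ → ℕ, Filter.Tendsto (fun n : ℕ => (f n : ℝ) / ((n : ℝ) / 2))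
      Filter.atTop (nhds 1) →
      Filter.Tendsto (fun n : ℕ => (f n : ℝ) / n) Filter.atTop (nhds (1 / 2)) := by
    intro f hf
    have h := hf.mul_const (1 / 2)
    rw [one_mul] at h
    refine Filter.Tendsto.congr' ?_ h
    filter_upwards [Filter.eventually_gt_atTop 0] with n hn
    have hn' : (0 : ℝ) < n := by exact_mod_cast hn
    field_simp
  have e1 : α * (Real.sqrt β / Real.sqrt α - 1) = Real.sqrt α * Real.sqrt β - α := by
    rw [mul_sub, mul_one]
    congr 1
    rw [mul_div_assoc', div_eq_iff hsa.ne']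
    linear_combination (-Real.sqrt β) * ha2
  have e2 : β * (Real.sqrt α / Real.sqrt β - 1) = Real.sqrt α * Real.sqrt β - β := by
    rw [mul_sub, mul_one]
    congr 1
    rw [mul_div_assoc', div_eq_iff hsb.ne']
    linear_combination (-Real.sqrt α) * hb2
  have hL : θ * ε + (1 / 2) * (α * (Real.exp (-θ) - 1))
      + (1 / 2) * (β * (Real.exp θ - 1)) = -c := by
    rw [hexpθ, hexpmθ, e1, e2, hcdef, hθdef, Real.sqrt_mul hα.le]
    ring
  have hg : Filter.Tendsto g Filter.atTop (nhds (-c)) := by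
    rw [← hL]
    exact (tendsto_const_nhds.add (((half mp hmp).mul_const _))).add
      ((half mm hmm).mul_const _)
  have hgev : ∀ᶠ n : ℕ in Filter.atTop, g n < -c + δ :=
    hg.eventually_lt_const (by linarith)
  -- smallness of p, q
  have hpq : Filter.Tendsto (fun n : ℕ => Real.log n / n) Filter.atTop (nhds 0) := by
    have h := Real.isLittleO_log_id_atTop.tendsto_div_nhds_zero
    exact h.comp tendsto_natCast_atTop_atTop
  have hpev : ∀ᶠ n : ℕ in Filter.atTop, α * Real.log n / n < 1 := by
    have := (hpq.const_mul α).eventually_lt_const (show α * 0 < 1 by norm_num)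
    simpa [mul_div_assoc] using this
  have hqev : ∀ᶠ n : ℕ in Filter.atTop, β * Real.log n / n < 1 := by
    have := (hpq.const_mul β).eventually_lt_const (show β * 0 < 1 by norm_num)
    simpa [mul_div_assoc] using this
  filter_upwards [hgev, hpev, hqev, Filter.eventually_ge_atTop 2] with n hgn hp1 hq1 hn2
  have hn0 : (0 : ℝ) < n := by positivity
  have hn1 : (1 : ℝ) < n := by exact_mod_cast Nat.lt_of_lt_of_le (by norm_num) hn2
  have hlogn : 0 < Real.log n := Real.log_pos hn1
  have hp0 : 0 ≤ α * Real.log n / n := by positivity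
  have hq0 : 0 ≤ β * Real.log n / n := by positivity
  set p : ℝ := α * Real.log n / n with hpdef
  set q : ℝ := β * Real.log n / n with hqdef
  have step1 := chernoff (mp n) (mm n) p q θ (ε * Real.log n) hp0 hp1.le hq0 hq1.le hθpos.le
  have bnn1 : (0 : ℝ) ≤ p * Real.exp (-θ) + (1 - p) := by
    have h1 : 0 ≤ p * Real.exp (-θ) := mul_nonneg hp0 (Real.exp_pos _).le
    linarith
  have bnn2 : (0 : ℝ) ≤ q * Real.exp θ + (1 - q) := by
    have h1 : 0 ≤ q * Real.exp θ := mul_nonneg hq0 (Real.exp_pos _).le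
    linarith
  have b1 : (p * Real.exp (-θ) + (1 - p)) ^ mp n
      ≤ Real.exp ((mp n : ℝ) * (p * (Real.exp (-θ) - 1))) := by
    have h := pow_le_exp (p * (Real.exp (-θ) - 1)) (mp n)
      (by rw [show (1 : ℝ) + p * (Real.exp (-θ) - 1) = p * Real.exp (-θ) + (1 - p) by ring]
          exact bnn1)
    have e : (1 : ℝ) + p * (Real.exp (-θ) - 1) = p * Real.exp (-θ) + (1 - p) := by ring
    rwa [e] at h
  have b2 : (q * Real.exp θ + (1 - q)) ^ mm n
      ≤ Real.exp ((mm n : ℝ) * (q * (Real.exp θ - 1))) := by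
    have h := pow_le_exp (q * (Real.exp θ - 1)) (mm n)
      (by rw [show (1 : ℝ) + q * (Real.exp θ - 1) = q * Real.exp θ + (1 - q) by ring]
          exact bnn2)
    have e : (1 : ℝ) + q * (Real.exp θ - 1) = q * Real.exp θ + (1 - q) := by ring
    rwa [e] at h
  have step2 : probDiffLE (mp n) (mm n) p q (ε * Real.log n)
      ≤ Real.exp (Real.log n * g n) := by
    refine step1.trans ?_
    have hmul : Real.exp (θ * (ε * Real.log n)) *
        ((p * Real.exp (-θ) + (1 - p)) ^ mp n * (q * Real.exp θ + (1 - q)) ^ mm n)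
        ≤ Real.exp (θ * (ε * Real.log n)) *
          (Real.exp ((mp n : ℝ) * (p * (Real.exp (-θ) - 1))) *
            Real.exp ((mm n : ℝ) * (q * (Real.exp θ - 1)))) := by
      apply mul_le_mul_of_nonneg_left _ (Real.exp_pos _).le
      exact mul_le_mul b1 b2 (pow_nonneg bnn2 _) (Real.exp_pos _).le
    refine hmul.trans_eq ?_
    rw [← Real.exp_add, ← Real.exp_add]
    congr 1
    simp only [hgdef, hpdef, hqdef]
    field_simp
    ring
  refine step2.trans ?_
  rw [Real.rpow_def_of_pos hn0]
  apply Real.exp_le_exp.2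
  have : -(((α + β) / 2 - Real.sqrt (α * β)) - ε / 2 * Real.log (α / β)) + δ = -c + δ := by
    rw [hcdef]
  rw [this]
  exact mul_le_mul_of_nonneg_left hgn.le hlogn.le
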